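/- Let D₁ be a real p×n matrix and D₂ a real n×q matrix, and suppose there exists a nonzero vector v ∈ ℝ^n such that (D₁ᵗ·D₁)·v = ‖D₁‖²·v and (D₂·D₂ᵗ)·v = ‖D₂‖²·v (a common Perron–Frobenius eigenvector). Then ‖D₁·D₂‖ = ‖D₁‖·‖D₂‖. (This is the sufficient condition for multiplicativity of the minimal index: if the left Perron–Frobenius eigenvector of the upper inclusion coincides with the right Perron–Frobenius eigenvector of the lower inclusion, then the scalar dimension, hence the minimal index, is multiplicative.) -/

import Mathlib

open Matrix BigOperators

/-- The ℓ²-operator norm of a real `m×n` matrix, i.e. the operator norm of the induced linear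
map from `ℝⁿ` to `ℝᵐ`, both equipped with the Euclidean norm. -/
noncomputable def l2OpNorm {m n : ℕ} (D : Matrix (Fin m) (Fin n) ℝ) : ℝ :=
  ‖LinearMap.toContinuousLinearMap (Matrix.toEuclideanLin D)‖

open scoped Matrix.Norms.L2Operator

lemma l2OpNorm_eq_norm {m n : ℕ} (D : Matrix (Fin m) (Fin n) ℝ) : l2OpNorm D = ‖D‖ := rfl

lemma euclid_norm_sq {k : ℕ} (x : Fin k → ℝ) :
    ‖(WithLp.equiv 2 (Fin k → ℝ)).symm x‖ ^ 2 = x ⬝ᵥ x := by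
  rw [EuclideanSpace.norm_eq, Real.sq_sqrt (by positivity)]
  simp [dotProduct, sq]

/-- Sufficient condition for multiplicativity of the minimal index: if `D₁ᵗD₁` and `D₂D₂ᵗ`
admit a common (nonzero) Perron–Frobenius eigenvector, then `‖D₁·D₂‖ = ‖D₁‖·‖D₂‖`. -/
theorem l2OpNorm_mul_of_common_PF_eigenvector {p n q : ℕ}
    (D₁ : Matrix (Fin p) (Fin n) ℝ) (D₂ : Matrix (Fin n) (Fin q) ℝ)
    (v : Fin n → ℝ) (hv : v ≠ 0)
    (h1 : (D₁ᵀ * D₁).mulVec v = l2OpNorm D₁ ^ 2 • v)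
    (h2 : (D₂ * D₂ᵀ).mulVec v = l2OpNorm D₂ ^ 2 • v) :
    l2OpNorm (D₁ * D₂) = l2OpNorm D₁ * l2OpNorm D₂ := by
  simp only [l2OpNorm_eq_norm] at h1 h2 ⊢
  refine le_antisymm (Matrix.l2_opNorm_mul D₁ D₂) ?_
  set w : Fin q → ℝ := D₂ᵀ *ᵥ v with hw
  have hD2w : D₂ *ᵥ w = ‖D₂‖ ^ 2 • v := by
    rw [hw, Matrix.mulVec_mulVec, h2]
  by_cases hw0 : w = 0
  · have hb : ‖D₂‖ = 0 := by
      rw [hw0, Matrix.mulVec_zero] at hD2w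
      have h2z : ‖D₂‖ ^ 2 = 0 := by
        rcases smul_eq_zero.mp hD2w.symm with h | h
        · exact h
        · exact absurd h hv
      exact pow_eq_zero_iff (two_ne_zero) |>.mp h2z
    have hD2 : D₂ = 0 := norm_eq_zero.mp hb
    simp [hD2, hb]
  · -- main case: w is an eigenvector of (D₁D₂)ᵀ(D₁D₂) with eigenvalue ‖D₁‖²‖D₂‖²
    have hkey : (D₁ * D₂)ᵀ *ᵥ ((D₁ * D₂) *ᵥ w) = (‖D₁‖ ^ 2 * ‖D₂‖ ^ 2) • w := by
      have e1 : (D₁ * D₂) *ᵥ w = D₁ *ᵥ (‖D₂‖ ^ 2 • v) := by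
        rw [← Matrix.mulVec_mulVec, hD2w]
      calc (D₁ * D₂)ᵀ *ᵥ ((D₁ * D₂) *ᵥ w)
          = D₂ᵀ *ᵥ (D₁ᵀ *ᵥ (D₁ *ᵥ (‖D₂‖ ^ 2 • v))) := by
            rw [e1, Matrix.transpose_mul]
            simp only [Matrix.mulVec_mulVec, Matrix.mul_assoc]
        _ = D₂ᵀ *ᵥ ((D₁ᵀ * D₁) *ᵥ (‖D₂‖ ^ 2 • v)) := by
            simp only [Matrix.mulVec_mulVec, Matrix.mul_assoc]
        _ = D₂ᵀ *ᵥ (‖D₂‖ ^ 2 • (‖D₁‖ ^ 2 • v)) := by rw [Matrix.mulVec_smul, h1]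
        _ = (‖D₁‖ ^ 2 * ‖D₂‖ ^ 2) • w := by
            rw [Matrix.mulVec_smul, Matrix.mulVec_smul, smul_smul, mul_comm]
    have hdot : ((D₁ * D₂) *ᵥ w) ⬝ᵥ ((D₁ * D₂) *ᵥ w)
        = (‖D₁‖ ^ 2 * ‖D₂‖ ^ 2) * (w ⬝ᵥ w) := by
      rw [Matrix.dotProduct_mulVec, ← Matrix.mulVec_transpose, hkey,
        smul_dotProduct, smul_eq_mul]
    have hsq : ‖(WithLp.equiv 2 (Fin p → ℝ)).symm ((D₁ * D₂) *ᵥ w)‖ ^ 2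
        = (‖D₁‖ * ‖D₂‖) ^ 2 * ‖(WithLp.equiv 2 (Fin q → ℝ)).symm w‖ ^ 2 := by
      rw [euclid_norm_sq, euclid_norm_sq, hdot]; ring
    have hwne : (WithLp.equiv 2 (Fin q → ℝ)).symm w ≠ 0 := by
      intro h
      apply hw0
      have := congrArg (⇑(WithLp.equiv 2 (Fin q → ℝ))) h
      simpa using this
    have hwpos : 0 < ‖(WithLp.equiv 2 (Fin q → ℝ)).symm w‖ := norm_pos_iff.mpr hwne
    have hle : ‖(WithLp.equiv 2 (Fin p → ℝ)).symm ((D₁ * D₂) *ᵥ w)‖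
        ≤ ‖D₁ * D₂‖ * ‖(WithLp.equiv 2 (Fin q → ℝ)).symm w‖ := by
      have := ((Matrix.toEuclideanLin.trans LinearMap.toContinuousLinearMap)
        (D₁ * D₂)).le_opNorm ((WithLp.equiv 2 (Fin q → ℝ)).symm w)
      simpa [Matrix.l2_opNorm_def, Matrix.toEuclideanLin_toLp] using this
    have hab : 0 ≤ ‖D₁‖ * ‖D₂‖ := mul_nonneg (norm_nonneg _) (norm_nonneg _)
    have hsq2 : (‖D₁‖ * ‖D₂‖) ^ 2 * ‖(WithLp.equiv 2 (Fin q → ℝ)).symm w‖ ^ 2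
        ≤ ‖D₁ * D₂‖ ^ 2 * ‖(WithLp.equiv 2 (Fin q → ℝ)).symm w‖ ^ 2 := by
      calc (‖D₁‖ * ‖D₂‖) ^ 2 * ‖(WithLp.equiv 2 (Fin q → ℝ)).symm w‖ ^ 2
          = ‖(WithLp.equiv 2 (Fin p → ℝ)).symm ((D₁ * D₂) *ᵥ w)‖ ^ 2 := hsq.symm
        _ ≤ (‖D₁ * D₂‖ * ‖(WithLp.equiv 2 (Fin q → ℝ)).symm w‖) ^ 2 :=
            pow_le_pow_left₀ (norm_nonneg _) hle 2
        _ = ‖D₁ * D₂‖ ^ 2 * ‖(WithLp.equiv 2 (Fin q → ℝ)).symm w‖ ^ 2 := by ring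
    have hsq3 : (‖D₁‖ * ‖D₂‖) ^ 2 ≤ ‖D₁ * D₂‖ ^ 2 :=
      le_of_mul_le_mul_right (by simpa [mul_comm] using hsq2) (pow_pos hwpos 2)
    exact (pow_le_pow_iff_left₀ hab (norm_nonneg _) two_ne_zero).mp hsq3
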